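/- For κ ∈ {0,1} and n ≥ 1, let e_κ(x) ∈ ℝⁿ have entries x^{κ+2j−2} e^{−x²/2} for j = 1,...,n, where for κ = −1 the first entry is replaced by η_{−1}(x) = −√(π/2)·erf(x/√2). Then for x₁ ≤ x₂ ≤ ... ≤ x_{n+1}, the iterated integral ∫_{x₁}^{x₂}dξ₁ ⋯ ∫_{x_n}^{x_{n+1}}dξ_n det(e_κ(ξ₁), ..., e_κ(ξ_n)) equals the (n+1)×(n+1) determinant whose first n rows are e_{κ−1}(x₁), ..., e_{κ−1}(x_{n+1}) (as columns) and whose last row is all ones. -/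

import Mathlib

open Finset Matrix MeasureTheory

/-- The error function `erf x = (2/√π) ∫₀ˣ e^{-t²} dt`. -/
noncomputable def erf (x : ℝ) : ℝ :=
  (2 / Real.sqrt Real.pi) * ∫ t in (0 : ℝ)..x, Real.exp (-t ^ 2)

/-- The vector `e_κ(x) ∈ ℝⁿ` with entries `x^{κ+2j-2} e^{-x²/2}` (`j = 1,…,n`),
where for `κ = -1` the first entry is replaced by `η₋₁(x) = -√(π/2)·erf(x/√2)`. -/
noncomputable def eVec (κ : ℤ) (n : ℕ) (x : ℝ) : Fin n → ℝ := fun j =>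
  if κ = -1 ∧ (j : ℕ) = 0 then -(Real.sqrt (Real.pi / 2)) * erf (x / Real.sqrt 2)
  else x ^ (κ + 2 * (j : ℤ)) * Real.exp (-x ^ 2 / 2)

namespace IterAux

noncomputable def G (k m : ℕ) (x : ℝ) : ℝ :=
  if k = 0 ∧ m = 0 then -(Real.sqrt (Real.pi / 2)) * erf (x / Real.sqrt 2)
  else x ^ (k + 2 * m - 1) * Real.exp (-x ^ 2 / 2)

noncomputable def F (k : ℕ) : ℕ → ℝ → ℝ
  | 0 => fun x => -G k 0 x
  | (j + 1) => fun x => -G k (j + 1) x + ((k : ℝ) + 2 * j + 1) * F k j x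

noncomputable def coef (k j m : ℕ) : ℝ := ∏ i ∈ Finset.Ico m j, ((k : ℝ) + 2 * i + 1)

lemma hasDerivAt_expSq (x : ℝ) :
    HasDerivAt (fun t : ℝ => Real.exp (-t ^ 2 / 2)) (-x * Real.exp (-x ^ 2 / 2)) x := by
  have h1 : HasDerivAt (fun t : ℝ => -t ^ 2 / 2) (-x) x := by
    have := (hasDerivAt_pow 2 x).neg.div_const 2
    refine this.congr_deriv ?_
    simp
    ring
  have := h1.exp
  convert this using 1
  ring

lemma hasDerivAt_mono (p : ℕ) (x : ℝ) :
    HasDerivAt (fun t : ℝ => t ^ p * Real.exp (-t ^ 2 / 2))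
      ((p : ℝ) * x ^ (p - 1) * Real.exp (-x ^ 2 / 2) - x ^ (p + 1) * Real.exp (-x ^ 2 / 2)) x := by
  have := (hasDerivAt_pow p x).mul (hasDerivAt_expSq x)
  refine this.congr_deriv ?_
  ring

lemma hasDerivAt_erf (x : ℝ) :
    HasDerivAt erf (2 / Real.sqrt Real.pi * Real.exp (-x ^ 2)) x := by
  have hc : Continuous fun t : ℝ => Real.exp (-t ^ 2) := by continuity
  have h := (hc.integral_hasStrictDerivAt 0 x).hasDerivAt
  exact h.const_mul _

lemma hasDerivAt_F (k : ℕ) (hk : k ≤ 1) (j : ℕ) (x : ℝ) :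
    HasDerivAt (F k j) (x ^ (k + 2 * j) * Real.exp (-x ^ 2 / 2)) x := by
  induction j with
  | zero =>
    show HasDerivAt (fun x => -G k 0 x) _ x
    interval_cases k
    · have h2 : HasDerivAt (fun t : ℝ => t / Real.sqrt 2) (1 / Real.sqrt 2) x := by
        simpa using (hasDerivAt_id x).div_const (Real.sqrt 2)
      have h1 := ((hasDerivAt_erf (x / Real.sqrt 2)).comp x h2).const_mul
        (Real.sqrt (Real.pi / 2))
      have hG : (fun x : ℝ => -G 0 0 x)
          = fun x => Real.sqrt (Real.pi / 2) * erf (x / Real.sqrt 2) := by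
        funext t; simp [G]
      rw [hG]
      refine h1.congr_deriv ?_
      have h2 : Real.sqrt 2 * Real.sqrt 2 = 2 := Real.mul_self_sqrt (by norm_num)
      have hπ : Real.sqrt Real.pi ≠ 0 := ne_of_gt (Real.sqrt_pos.mpr Real.pi_pos)
      have hs2 : (Real.sqrt 2 : ℝ) ≠ 0 := by positivity
      have hd : Real.sqrt (Real.pi / 2) = Real.sqrt Real.pi / Real.sqrt 2 :=
        Real.sqrt_div Real.pi_pos.le 2
      have he : (-(x / Real.sqrt 2) ^ 2) = -x ^ 2 / 2 := by
        rw [div_pow]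
        rw [Real.sq_sqrt (by norm_num : (2:ℝ) ≥ 0)]
        ring
      rw [he, hd]
      field_simp
      linear_combination (-1 : ℝ) * h2
    · have hG : (fun x : ℝ => -G 1 0 x) = fun x => -Real.exp (-x ^ 2 / 2) := by
        funext t; simp [G]
      rw [hG]
      have := (hasDerivAt_expSq x).neg
      refine this.congr_deriv ?_
      ring
  | succ j ih =>
    show HasDerivAt (fun x => -G k (j + 1) x + ((k : ℝ) + 2 * j + 1) * F k j x) _ x
    have hG : G k (j + 1) = fun x : ℝ => x ^ (k + 2 * j + 1) * Real.exp (-x ^ 2 / 2) := by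
      funext t
      have hne : ¬(k = 0 ∧ j + 1 = 0) := by omega
      have hexp : k + 2 * (j + 1) - 1 = k + 2 * j + 1 := by omega
      simp only [G, if_neg hne, hexp]
    rw [hG]
    have h := ((hasDerivAt_mono (k + 2 * j + 1) x).neg).add (ih.const_mul ((k : ℝ) + 2 * j + 1))
    refine h.congr_deriv ?_
    have hp : k + 2 * j + 1 - 1 = k + 2 * j := by omega
    rw [hp]
    push_cast
    ring

lemma F_eq (k j : ℕ) (x : ℝ) :
    F k j x = ∑ m ∈ Finset.range (j + 1), -(coef k j m) * G k m x := by
  induction j with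
  | zero => simp [F, coef]
  | succ j ih =>
    rw [Finset.sum_range_succ]
    show -G k (j + 1) x + ((k : ℝ) + 2 * j + 1) * F k j x = _
    rw [ih, Finset.mul_sum]
    have h1 : coef k (j + 1) (j + 1) = 1 := by simp [coef]
    have h2 : ∀ m ∈ Finset.range (j + 1),
        ((k : ℝ) + 2 * j + 1) * (-(coef k j m) * G k m x) = -(coef k (j + 1) m) * G k m x := by
      intro m hm
      have : coef k (j + 1) m = coef k j m * ((k : ℝ) + 2 * j + 1) := by
        unfold coef
        exact Finset.prod_Ico_succ_top (Nat.lt_succ_iff.mp (Finset.mem_range.mp hm)) _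
      rw [this]; ring
    rw [Finset.sum_congr rfl h2, h1]
    ring

lemma G_eq_eVec (k : ℕ) (n : ℕ) (m : Fin n) (x : ℝ) :
    G k (m : ℕ) x = eVec ((k : ℤ) - 1) n x m := by
  simp only [G, eVec]
  by_cases h : k = 0 ∧ (m : ℕ) = 0
  · rw [if_pos h, if_pos ⟨by omega, h.2⟩]
  · rw [if_neg h, if_neg (by rintro ⟨h1, h2⟩; exact h ⟨by omega, h2⟩)]
    congr 1
    have he : (k : ℤ) - 1 + 2 * ((m : ℕ) : ℤ) = ((k + 2 * (m : ℕ) - 1 : ℕ) : ℤ) := by omega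
    rw [show ((m : Fin n) : ℤ) = ((m : ℕ) : ℤ) from rfl, he, zpow_natCast]

lemma integral_g (k : ℕ) (hk : k ≤ 1) (j : ℕ) {a b : ℝ} (hab : a ≤ b) :
    ∫ t in Set.Icc a b, t ^ (k + 2 * j) * Real.exp (-t ^ 2 / 2) = F k j b - F k j a := by
  rw [MeasureTheory.integral_Icc_eq_integral_Ioc, ← intervalIntegral.integral_of_le hab]
  exact intervalIntegral.integral_eq_sub_of_hasDerivAt (fun t _ => hasDerivAt_F k hk j t)
    (Continuous.intervalIntegrable (by continuity) a b)

lemma sum_trunc {M : Type*} [AddCommMonoid M] (n j : ℕ) (hj : j < n) (f : ℕ → M)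
    (h0 : ∀ m, j < m → f m = 0) :
    ∑ m : Fin n, f (m : ℕ) = ∑ m ∈ Finset.range (j + 1), f m := by
  rw [Fin.sum_univ_eq_sum_range]
  exact (Finset.sum_subset (Finset.range_subset_range.mpr hj) fun m _ hm =>
    h0 m (by simpa using hm)).symm

lemma integral_det (n : ℕ) (g : Fin n → ℝ → ℝ) (hg : ∀ j, Continuous (g j))
    (a b : Fin n → ℝ) :
    (∫ ξ : Fin n → ℝ in Set.univ.pi (fun i => Set.Icc (a i) (b i)),
      (Matrix.of fun j i : Fin n => g j (ξ i)).det) =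
    (Matrix.of fun j i : Fin n => ∫ t in Set.Icc (a i) (b i), g j t).det := by
  have hSm : MeasurableSet (Set.univ.pi fun i : Fin n => Set.Icc (a i) (b i)) :=
    MeasurableSet.univ_pi fun i => measurableSet_Icc
  have hint : ∀ c : Fin n → Fin n,
      Integrable (fun ξ : Fin n → ℝ =>
        ∏ i, (Set.Icc (a i) (b i)).indicator (g (c i)) (ξ i)) := by
    intro c
    apply Integrable.fintype_prod (f := fun i => (Set.Icc (a i) (b i)).indicator (g (c i)))
    intro i
    rw [integrable_indicator_iff measurableSet_Icc]
    exact (hg _).integrableOn_Icc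
  rw [← integral_indicator hSm]
  have key : (Set.univ.pi fun i : Fin n => Set.Icc (a i) (b i)).indicator
      (fun ξ => (Matrix.of fun j i : Fin n => g j (ξ i)).det) =
      fun ξ => ∑ σ : Equiv.Perm (Fin n), ((Equiv.Perm.sign σ : ℤ) : ℝ) *
        ∏ i, (Set.Icc (a i) (b i)).indicator (g (σ i)) (ξ i) := by
    funext ξ
    by_cases hξ : ξ ∈ Set.univ.pi fun i : Fin n => Set.Icc (a i) (b i)
    · rw [Set.indicator_of_mem hξ, Matrix.det_apply']
      refine Finset.sum_congr rfl fun σ _ => ?_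
      congr 1
      refine Finset.prod_congr rfl fun i _ => ?_
      rw [Set.indicator_of_mem (hξ i (Set.mem_univ i))]
      rfl
    · rw [Set.indicator_of_notMem hξ]
      rw [Set.mem_univ_pi] at hξ
      push_neg at hξ
      obtain ⟨i0, hi0⟩ := hξ
      symm
      refine Finset.sum_eq_zero fun σ _ => ?_
      rw [Finset.prod_eq_zero (Finset.mem_univ i0) (Set.indicator_of_notMem hi0 _), mul_zero]
  rw [key, integral_finset_sum _ fun σ _ => (hint _).const_mul _]
  rw [Matrix.det_apply']
  refine Finset.sum_congr rfl fun σ _ => ?_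
  rw [integral_const_mul]
  congr 1
  rw [MeasureTheory.integral_fintype_prod_volume_eq_prod
    (f := fun i => (Set.Icc (a i) (b i)).indicator (g (σ i)))]
  refine Finset.prod_congr rfl fun i _ => ?_
  rw [integral_indicator measurableSet_Icc]
  rfl

end IterAux

/-- For `κ ∈ {0,1}` and `x₁ ≤ … ≤ x_{n+1}`, the iterated integral
`∫_{x₁}^{x₂}dξ₁ ⋯ ∫_{x_n}^{x_{n+1}}dξ_n det(e_κ(ξ₁),…,e_κ(ξ_n))`
equals the `(n+1)×(n+1)` determinant with columns `e_{κ-1}(x_i)` bordered below by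
a row of ones. -/
theorem iterated_integral_det (κ : ℤ) (hκ : κ = 0 ∨ κ = 1) (n : ℕ)
    (x : Fin (n + 1) → ℝ) (hx : Monotone x) :
    (∫ ξ : Fin n → ℝ in
        Set.univ.pi (fun i : Fin n => Set.Icc (x i.castSucc) (x i.succ)),
        (Matrix.of fun j i : Fin n => eVec κ n (ξ i) j).det) =
      (Matrix.of fun j i : Fin (n + 1) =>
          if h : (j : ℕ) < n then eVec (κ - 1) n (x i) ⟨(j : ℕ), h⟩ else 1).det := by
  obtain ⟨k, hk, rfl⟩ : ∃ k : ℕ, k ≤ 1 ∧ κ = (k : ℤ) := by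
    rcases hκ with h | h
    · exact ⟨0, by omega, by omega⟩
    · exact ⟨1, by omega, by omega⟩
  set g : Fin n → ℝ → ℝ := fun j t => t ^ (k + 2 * (j : ℕ)) * Real.exp (-t ^ 2 / 2) with hg
  have hgc : ∀ j, Continuous (g j) := fun j => by
    apply Continuous.mul (continuous_pow _)
    exact Real.continuous_exp.comp (by continuity)
  have h1 : ∀ ξ : Fin n → ℝ, ∀ j i : Fin n, eVec (k : ℤ) n (ξ i) j = g j (ξ i) := by
    intro ξ j i
    simp only [eVec, hg]
    rw [if_neg (by rintro ⟨h, -⟩; omega)]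
    rw [show (k : ℤ) + 2 * (j : ℤ) = ((k + 2 * (j : ℕ) : ℕ) : ℤ) by push_cast; ring,
      zpow_natCast]
  simp only [h1]
  rw [IterAux.integral_det n g hgc (fun i => x i.castSucc) (fun i => x i.succ)]
  set C : Matrix (Fin n) (Fin n) ℝ :=
    Matrix.of fun j m : Fin n =>
      if (m : ℕ) ≤ (j : ℕ) then -(IterAux.coef k (j : ℕ) (m : ℕ)) else 0 with hC
  set D : Matrix (Fin n) (Fin n) ℝ :=
    Matrix.of fun m i : Fin n =>
      IterAux.G k (m : ℕ) (x i.succ) - IterAux.G k (m : ℕ) (x i.castSucc) with hD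
  have hA : (Matrix.of fun j i : Fin n =>
      ∫ t in Set.Icc (x i.castSucc) (x i.succ), g j t) = C * D := by
    ext j i
    rw [Matrix.mul_apply]
    simp only [Matrix.of_apply, hg, hC, hD]
    rw [IterAux.integral_g k hk (j : ℕ) (hx (Fin.castSucc_lt_succ (i := i)).le)]
    rw [IterAux.F_eq, IterAux.F_eq, ← Finset.sum_sub_distrib]
    symm
    refine Eq.trans (IterAux.sum_trunc n (j : ℕ) j.isLt
      (fun m' => (if m' ≤ (j : ℕ) then -(IterAux.coef k (j : ℕ) m') else 0) *
        (IterAux.G k m' (x i.succ) - IterAux.G k m' (x i.castSucc)))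
      (fun m hm => by beta_reduce; rw [if_neg (by omega), zero_mul])) ?_
    refine Finset.sum_congr rfl fun m hm => ?_
    beta_reduce
    rw [if_pos (by simpa [Nat.lt_succ_iff] using Finset.mem_range.mp hm)]
    ring
  rw [hA, Matrix.det_mul]
  have hdetC : C.det = (-1 : ℝ) ^ n := by
    rw [Matrix.det_of_lowerTriangular C (by
      intro a b hab
      simp only [hC, Matrix.of_apply]
      rw [if_neg]
      intro hba
      exact absurd (Fin.le_def.mpr hba) (not_le.mpr hab))]
    have hCdiag : ∀ i : Fin n, C i i = -1 := fun i => by simp [hC, IterAux.coef]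
    rw [Finset.prod_congr rfl fun i _ => hCdiag i, Finset.prod_const]
    simp
  rw [hdetC]
  set P : Matrix (Fin (n + 1)) (Fin (n + 1)) ℝ :=
    Matrix.of fun i i' : Fin (n + 1) =>
      (if i = i' then (1 : ℝ) else 0) - (if (i : ℕ) + 1 = (i' : ℕ) then 1 else 0) with hP
  set Mm : Matrix (Fin (n + 1)) (Fin (n + 1)) ℝ :=
    Matrix.of fun j i : Fin (n + 1) =>
      if h : (j : ℕ) < n then eVec ((k : ℤ) - 1) n (x i) ⟨(j : ℕ), h⟩ else 1 with hM
  have hbot : ∀ i : Fin (n + 1), Mm (Fin.last n) i = 1 := fun i => by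
    simp only [hM, Matrix.of_apply, Fin.val_last]
    rw [dif_neg (lt_irrefl n)]
  have hmul : ∀ (j : Fin (n + 1)) (i : Fin n),
      (Mm * P) j i.succ = Mm j i.succ - Mm j i.castSucc := by
    intro j i
    rw [Matrix.mul_apply]
    have hterm : ∀ i₀ : Fin (n + 1), Mm j i₀ * P i₀ i.succ =
        (if i₀ = i.succ then Mm j i₀ else 0) - (if i₀ = i.castSucc then Mm j i₀ else 0) := by
      intro i₀
      simp only [hP, Matrix.of_apply, mul_sub, mul_ite, mul_one, mul_zero]
      congr 1
      refine if_congr ?_ rfl rfl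
      rw [Fin.val_succ, Fin.ext_iff, Fin.coe_castSucc]
      omega
    rw [Finset.sum_congr rfl fun i₀ _ => hterm i₀, Finset.sum_sub_distrib,
      Finset.sum_ite_eq' Finset.univ i.succ (fun i₀ => Mm j i₀),
      Finset.sum_ite_eq' Finset.univ i.castSucc (fun i₀ => Mm j i₀)]
    simp
  have hmul0 : ∀ j : Fin (n + 1), (Mm * P) j 0 = Mm j 0 := by
    intro j
    rw [Matrix.mul_apply]
    have hterm : ∀ i₀ : Fin (n + 1), Mm j i₀ * P i₀ 0 =
        (if i₀ = 0 then Mm j i₀ else 0) := by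
      intro i₀
      simp only [hP, Matrix.of_apply]
      rw [if_neg (show ¬((i₀ : ℕ) + 1 = ((0 : Fin (n + 1)) : ℕ)) by simp), sub_zero,
        mul_ite, mul_one, mul_zero]
    rw [Finset.sum_congr rfl fun i₀ _ => hterm i₀,
      Finset.sum_ite_eq' Finset.univ (0 : Fin (n + 1)) (fun i₀ => Mm j i₀)]
    simp
  have hPdet : P.det = 1 := by
    rw [Matrix.det_of_upperTriangular (M := P) (by
      intro a b hab
      simp only [hP, Matrix.of_apply]
      rw [if_neg (show a ≠ b from by rintro rfl; exact lt_irrefl _ hab),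
        if_neg (show ¬((a : ℕ) + 1 = (b : ℕ)) from by
          have hba : (b : ℕ) < (a : ℕ) := hab
          omega)]
      norm_num)]
    refine Finset.prod_eq_one fun i _ => ?_
    simp [hP]
  have hMmP : Mm.det = (Mm * P).det := by rw [Matrix.det_mul, hPdet, mul_one]
  rw [hMmP, Matrix.det_succ_row (Mm * P) (Fin.last n)]
  rw [Finset.sum_eq_single_of_mem (0 : Fin (n + 1)) (Finset.mem_univ _) (fun i' _ hne => by
    obtain ⟨m, rfl⟩ := Fin.exists_succ_eq.mpr hne
    rw [hmul, hbot, hbot, sub_self, mul_zero, zero_mul])]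
  rw [hmul0, hbot]
  have hsub : (Mm * P).submatrix (Fin.last n).succAbove (0 : Fin (n + 1)).succAbove = D := by
    ext j i
    rw [Matrix.submatrix_apply, Fin.succAbove_last, Fin.succAbove_zero, hmul]
    have key : ∀ i' : Fin (n + 1), Mm j.castSucc i' = IterAux.G k (j : ℕ) (x i') := by
      intro i'
      have hjn : (j : ℕ) < n := j.isLt
      have h2 : Mm j.castSucc i' = eVec ((k : ℤ) - 1) n (x i') ⟨(j : ℕ), hjn⟩ := by
        simp only [hM, Matrix.of_apply, Fin.coe_castSucc]
        rw [dif_pos hjn]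
      rw [h2, ← IterAux.G_eq_eVec k n ⟨(j : ℕ), hjn⟩ (x i')]
    rw [key, key]
    simp [hD]
  rw [hsub]
  rw [Fin.val_last, Fin.val_zero]
  ring
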